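/- Every finite coloring of ℕ admits a cell containing, for every pair (d, l) of positive integers simultaneously (i.e., one fixed cell working for all d and l), a polynomial progression of length l and degree exactly d with positive integer coefficients. -/

import Mathlib

open Finset in
lemma key_step (r : ℕ) (C : ℕ → Fin r) (n : ℕ) :
    ∃ c : Fin r, ∀ d l : ℕ, 0 < d → 0 < l → d ≤ n → l ≤ n →
      ∃ a : ℕ → ℕ, (∀ i ≤ d, 0 < a i) ∧
        ∀ k, 1 ≤ k → k ≤ l →
          C (∑ i ∈ Finset.range (d + 1), a i * k ^ i) = c := by
  obtain ⟨a, ha, b, c, hc⟩ :=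
    Combinatorics.exists_mono_homothetic_copy (Finset.range ((n + 1) * (n + 1) ^ n + 1)) C
  refine ⟨c, fun d l hd hl hdn hln => ?_⟩
  refine ⟨fun i => if i = 0 then a + b else a, fun i _ => ?_, fun k hk hkl => ?_⟩
  · by_cases h : i = 0 <;> simp [h] <;> omega
  · set s := ∑ i ∈ Finset.range (d + 1), k ^ i with hs
    have hsum : ∑ i ∈ Finset.range (d + 1), (if i = 0 then a + b else a) * k ^ i
        = a * s + b := by
      have h1 : ∀ i ∈ Finset.range (d + 1),
          (if i = 0 then a + b else a) * k ^ i = a * k ^ i + (if i = 0 then b else 0) := by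
        intro i _
        by_cases h : i = 0 <;> simp [h]
      rw [Finset.sum_congr rfl h1, Finset.sum_add_distrib, ← Finset.mul_sum,
        Finset.sum_ite_eq' (Finset.range (d + 1)) 0 (fun _ => b)]
      simp [hs]
    rw [hsum]
    have hmem : s ∈ Finset.range ((n + 1) * (n + 1) ^ n + 1) := by
      rw [Finset.mem_range, Nat.lt_succ_iff]
      have hbound : ∀ i ∈ Finset.range (d + 1), k ^ i ≤ (n + 1) ^ n := by
        intro i hi
        rw [Finset.mem_range, Nat.lt_succ_iff] at hi
        calc k ^ i ≤ (n + 1) ^ i := Nat.pow_le_pow_left (by omega) i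
          _ ≤ (n + 1) ^ n := Nat.pow_le_pow_right (by omega) (by omega)
      calc s ≤ ∑ _i ∈ Finset.range (d + 1), (n + 1) ^ n := Finset.sum_le_sum hbound
        _ = (d + 1) * (n + 1) ^ n := by rw [Finset.sum_const, Finset.card_range, smul_eq_mul]
        _ ≤ (n + 1) * (n + 1) ^ n := by
            exact Nat.mul_le_mul_right _ (by omega)
    have := hc s hmem
    rwa [smul_eq_mul] at this

/-- Every finite coloring of `ℕ` has one fixed cell which contains, for every degree
`d` and every length `l` simultaneously, a polynomial progression of length `l` and
degree exactly `d` with positive integer coefficients. -/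
theorem stmt_18 (r : ℕ) (C : ℕ → Fin r) :
    ∃ col : Fin r, ∀ d l : ℕ, 0 < d → 0 < l →
      ∃ a : ℕ → ℕ, (∀ i ≤ d, 0 < a i) ∧
        ∀ k, 1 ≤ k → k ≤ l →
          C (∑ i ∈ Finset.range (d + 1), a i * k ^ i) = col := by
  choose g hg using key_step r C
  rcases Nat.eq_zero_or_pos r with rfl | hr
  · exact (C 0).elim0
  obtain ⟨col, hcol⟩ := Finite.exists_infinite_fiber g
  replace hcol := Set.infinite_coe_iff.mp hcol
  refine ⟨col, fun d l hd hl => ?_⟩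
  obtain ⟨n, hn, hlt⟩ := hcol.exists_gt (max d l)
  have hgn : g n = col := hn
  obtain ⟨a, ha, hA⟩ := hg n d l hd hl (by omega) (by omega)
  exact ⟨a, ha, fun k h1 h2 => by rw [hA k h1 h2, hgn]⟩
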